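/- Let ρ > 0, λ > 0, L > 0, c ≥ L²/ρ, and d ≥ 1. For positive definite A ∈ ℝ^{d×d} define Ψ*_A(x) = ½·xᵀA⁻¹x. Define U(x, S) = Ψ*_{ρS+λI}(x) − c·log(det(ρS+λI)/det(λI)) for x ∈ ℝ^d and S positive semidefinite. Then for any x, S, any z ∈ ℝ^d, and any mean-zero distribution p on [−L,L]: E_{α∼p}[U(x + αz, S + zzᵀ)] ≤ U(x, S). -/

import Mathlib

open MeasureTheory Matrix

/-- The Vovk–Azoury–Warmuth style Burkholder function
`U(x, S) = ½ xᵀ(ρS+λI)⁻¹x − c·log(det(ρS+λI)/det(λI))`. -/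
noncomputable def Uvaw (d : ℕ) (ρ lam c : ℝ) (x : Fin d → ℝ)
    (S : Matrix (Fin d) (Fin d) ℝ) : ℝ :=
  (1 / 2) * (x ⬝ᵥ ((ρ • S + lam • (1 : Matrix (Fin d) (Fin d) ℝ))⁻¹).mulVec x) -
    c * Real.log ((ρ • S + lam • (1 : Matrix (Fin d) (Fin d) ℝ)).det /
      (lam • (1 : Matrix (Fin d) (Fin d) ℝ)).det)

section AuxLemmas

variable {d : ℕ}

lemma myVecMulVec_mulVec (w v u : Fin d → ℝ) :
    (vecMulVec w v) *ᵥ u = (v ⬝ᵥ u) • w := by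
  ext i
  simp only [mulVec, dotProduct, vecMulVec_apply, Pi.smul_apply, smul_eq_mul,
    Finset.sum_mul, Finset.mul_sum]
  refine Finset.sum_congr rfl fun k _ => by ring

lemma myMul_vecMulVec (M : Matrix (Fin d) (Fin d) ℝ) (w v : Fin d → ℝ) :
    M * vecMulVec w v = vecMulVec (M *ᵥ w) v := by
  ext i j
  simp [mul_apply, vecMulVec_apply, mulVec, dotProduct, Finset.sum_mul, mul_assoc]

lemma myVecMulVec_mul (w v : Fin d → ℝ) (M : Matrix (Fin d) (Fin d) ℝ) :
    vecMulVec w v * M = vecMulVec w (v ᵥ* M) := by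
  ext i j
  simp [mul_apply, vecMulVec_apply, vecMul, dotProduct, Finset.mul_sum, mul_assoc]

lemma myVecMulVec_mul_vecMulVec (a b c e : Fin d → ℝ) :
    vecMulVec a b * vecMulVec c e = (b ⬝ᵥ c) • vecMulVec a e := by
  ext i j
  simp only [mul_apply, vecMulVec_apply, Matrix.smul_apply, smul_eq_mul, dotProduct, Finset.sum_mul]
  refine Finset.sum_congr rfl fun k _ => by ring

lemma myPosSemidef_vecMulVec (z : Fin d → ℝ) : (vecMulVec z z).PosSemidef := by
  refine PosSemidef.of_dotProduct_mulVec_nonneg ?_ fun u => ?_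
  · ext i j
    simp [conjTranspose_apply, vecMulVec_apply, mul_comm]
  · rw [myVecMulVec_mulVec, dotProduct_smul]
    simp only [star_trivial, smul_eq_mul, dotProduct_comm z u]
    exact mul_self_nonneg _

lemma myPosSemidef_smul {M : Matrix (Fin d) (Fin d) ℝ} (hM : M.PosSemidef) {ρ : ℝ}
    (hρ : 0 ≤ ρ) : (ρ • M).PosSemidef := by
  refine PosSemidef.of_dotProduct_mulVec_nonneg ?_ fun u => ?_
  · ext i j
    simp only [conjTranspose_apply, Matrix.smul_apply, star_trivial, smul_eq_mul]
    congr 1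
    simpa using congrFun (congrFun hM.1 i) j
  · rw [smul_mulVec, dotProduct_smul]
    exact mul_nonneg hρ (hM.dotProduct_mulVec_nonneg u)

lemma myPosDef_smul {M : Matrix (Fin d) (Fin d) ℝ} (hM : M.PosDef) {ρ : ℝ}
    (hρ : 0 < ρ) : (ρ • M).PosDef := by
  refine PosDef.of_dotProduct_mulVec_pos ?_ fun u hu => ?_
  · ext i j
    simp only [conjTranspose_apply, Matrix.smul_apply, star_trivial, smul_eq_mul]
    congr 1
    simpa using congrFun (congrFun hM.1 i) j
  · rw [smul_mulVec, dotProduct_smul]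
    exact mul_pos hρ (hM.dotProduct_mulVec_pos hu)

lemma myDot_expand (M : Matrix (Fin d) (Fin d) ℝ) (x z : Fin d → ℝ) (α : ℝ) :
    (x + α • z) ⬝ᵥ M *ᵥ (x + α • z)
      = x ⬝ᵥ M *ᵥ x + α * (x ⬝ᵥ M *ᵥ z + z ⬝ᵥ M *ᵥ x) + α^2 * (z ⬝ᵥ M *ᵥ z) := by
  rw [mulVec_add, mulVec_smul, dotProduct_add, add_dotProduct, add_dotProduct,
    dotProduct_smul, smul_dotProduct, smul_dotProduct, dotProduct_smul]
  simp only [smul_eq_mul]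
  ring

end AuxLemmas

/-- Restricted concavity (property 3°) of the Vovk–Azoury–Warmuth Burkholder function
(Theorem 6.6): for any mean-zero distribution `p` on `[−L, L]`,
`E_{α∼p}[U(x + αz, S + zzᵀ)] ≤ U(x, S)` whenever `c ≥ L²/ρ`. -/
theorem Uvaw_restricted_concavity (d : ℕ) (ρ lam L c : ℝ)
    (hρ : 0 < ρ) (hlam : 0 < lam) (hL : 0 < L) (hc : L ^ 2 / ρ ≤ c)
    (x z : Fin d → ℝ) (S : Matrix (Fin d) (Fin d) ℝ) (hS : S.PosSemidef)
    (p : Measure ℝ) [IsProbabilityMeasure p]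
    (hsupp : p (Set.Icc (-L) L)ᶜ = 0) (hmean : ∫ α, α ∂p = 0) :
    ∫ α, Uvaw d ρ lam c (x + α • z) (S + Matrix.vecMulVec z z) ∂p ≤
      Uvaw d ρ lam c x S := by
  classical
  set V : Matrix (Fin d) (Fin d) ℝ := vecMulVec z z with hV
  set B : Matrix (Fin d) (Fin d) ℝ := ρ • S + lam • 1 with hBdef
  have hBA : ρ • (S + V) + lam • (1 : Matrix (Fin d) (Fin d) ℝ) = B + ρ • V := by
    rw [smul_add, hBdef]; abel
  have hlam1 : (lam • (1 : Matrix (Fin d) (Fin d) ℝ)).PosDef :=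
    myPosDef_smul Matrix.PosDef.one hlam
  have hB : B.PosDef :=
    Matrix.PosDef.posSemidef_add (myPosSemidef_smul hS hρ.le) hlam1
  have hA : (B + ρ • V).PosDef :=
    Matrix.PosDef.add_posSemidef hB (myPosSemidef_smul (myPosSemidef_vecMulVec z) hρ.le)
  have hBdet : IsUnit B.det := hB.det_pos.ne'.isUnit
  have hBinv : B * B⁻¹ = 1 := Matrix.mul_nonsing_inv _ hBdet
  have hBinvT : B⁻¹ᵀ = B⁻¹ := by
    have h1 := hB.1.inv
    ext i j
    simpa using congrFun (congrFun h1 i) j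
  have hBinvSym : ∀ a b : Fin d → ℝ, a ⬝ᵥ B⁻¹ *ᵥ b = b ⬝ᵥ B⁻¹ *ᵥ a := by
    intro a b
    rw [dotProduct_mulVec, ← mulVec_transpose, hBinvT, dotProduct_comm]
  set s := z ⬝ᵥ B⁻¹ *ᵥ z with hsdef
  have hs : 0 ≤ s := by simpa using hB.inv.posSemidef.dotProduct_mulVec_nonneg z
  set t := ρ * s with htdef
  have ht : 0 ≤ t := mul_nonneg hρ.le hs
  have h1t : (0:ℝ) < 1 + t := by linarith
  have hVBV : V * B⁻¹ * V = s • V := by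
    rw [hV, myVecMulVec_mul, myVecMulVec_mul_vecMulVec]
    rw [hsdef, dotProduct_mulVec]
  set r := ρ / (1 + t) with hrdef
  have hr : 0 ≤ r := div_nonneg hρ.le h1t.le
  -- Sherman–Morrison
  have hAinv : (B + ρ • V)⁻¹ = B⁻¹ - r • (B⁻¹ * V * B⁻¹) := by
    apply Matrix.inv_eq_right_inv
    have e1 : B * (B⁻¹ * V * B⁻¹) = V * B⁻¹ := by
      rw [← Matrix.mul_assoc, ← Matrix.mul_assoc, hBinv, Matrix.one_mul]
    have e2 : V * (B⁻¹ * V * B⁻¹) = s • (V * B⁻¹) := by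
      calc V * (B⁻¹ * V * B⁻¹) = (V * B⁻¹ * V) * B⁻¹ := by
            simp only [Matrix.mul_assoc]
        _ = s • (V * B⁻¹) := by rw [hVBV, Matrix.smul_mul]
    have hcoef : ρ - r - r * s * ρ = 0 := by
      rw [hrdef]
      field_simp
      ring
    simp only [Matrix.add_mul, Matrix.smul_mul, Matrix.mul_sub, Matrix.mul_smul, hBinv,
      e1, e2, smul_smul, smul_sub]
    rw [smul_add, smul_smul]
    have h0 : ρ • (V * B⁻¹) - (r • (V * B⁻¹) + (r * (ρ * s)) • (V * B⁻¹))
        = (0 : Matrix (Fin d) (Fin d) ℝ) := by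
      rw [← add_smul, ← sub_smul, show ρ - (r + r * (ρ * s)) = 0 by linear_combination hcoef,
        zero_smul]
    rw [add_sub_assoc, h0, add_zero]
  have hBVB : B⁻¹ * V * B⁻¹ = vecMulVec (B⁻¹ *ᵥ z) (z ᵥ* B⁻¹) := by
    rw [hV, myMul_vecMulVec, myVecMulVec_mul]
  have hquad : ∀ a b : Fin d → ℝ, a ⬝ᵥ (B⁻¹ * V * B⁻¹) *ᵥ b
      = (a ⬝ᵥ B⁻¹ *ᵥ z) * (z ⬝ᵥ B⁻¹ *ᵥ b) := by
    intro a b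
    rw [hBVB, myVecMulVec_mulVec, dotProduct_smul, smul_eq_mul, ← dotProduct_mulVec,
      dotProduct_comm a (B⁻¹ *ᵥ z)]
    exact mul_comm _ _
  have hq0 : x ⬝ᵥ (B + ρ • V)⁻¹ *ᵥ x = x ⬝ᵥ B⁻¹ *ᵥ x - r * (x ⬝ᵥ B⁻¹ *ᵥ z)^2 := by
    rw [hAinv, Matrix.sub_mulVec, dotProduct_sub, smul_mulVec, dotProduct_smul,
      smul_eq_mul, hquad x x, hBinvSym z x]
    ring
  have hqz : z ⬝ᵥ (B + ρ • V)⁻¹ *ᵥ z = s - r * s^2 := by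
    rw [hAinv, Matrix.sub_mulVec, dotProduct_sub, smul_mulVec, dotProduct_smul,
      smul_eq_mul, hquad z z, ← hsdef]
    ring
  have hqval : z ⬝ᵥ (B + ρ • V)⁻¹ *ᵥ z = s / (1 + t) := by
    rw [hqz, hrdef, htdef]
    field_simp
    ring
  have hqnn : 0 ≤ z ⬝ᵥ (B + ρ • V)⁻¹ *ᵥ z := by simpa using hA.inv.posSemidef.dotProduct_mulVec_nonneg z
  have hdet : (B + ρ • V).det = B.det * (1 + t) := by
    have h1 : ρ • V = replicateCol Unit (ρ • z) * replicateRow Unit z := by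
      rw [← vecMulVec_eq]
      ext i j
      simp only [hV, vecMulVec_apply, Matrix.smul_apply, Pi.smul_apply, smul_eq_mul]
      ring
    rw [h1, Matrix.det_add_replicateCol_mul_replicateRow hBdet]
    congr 1
    rw [det_unique]
    rw [Matrix.mul_assoc, ← replicateCol_mulVec, Matrix.add_apply, Matrix.one_apply_eq,
      replicateRow_mul_replicateCol_apply, mulVec_smul, dotProduct_smul, smul_eq_mul, ← hsdef, ← htdef]
  have hdetL : (lam • (1 : Matrix (Fin d) (Fin d) ℝ)).det = lam ^ d := by
    simp [Matrix.det_smul]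
  have hdetLpos : (0:ℝ) < lam ^ d := pow_pos hlam d
  have hdetBpos : 0 < B.det := hB.det_pos
  have hlogsplit : Real.log ((B + ρ • V).det / (lam • (1 : Matrix (Fin d) (Fin d) ℝ)).det)
      = Real.log (B.det / (lam • (1 : Matrix (Fin d) (Fin d) ℝ)).det) + Real.log (1 + t) := by
    rw [hdetL, hdet, Real.log_div (by positivity) hdetLpos.ne',
      Real.log_mul hdetBpos.ne' h1t.ne', Real.log_div hdetBpos.ne' hdetLpos.ne']
    ring
  have hqval : z ⬝ᵥ (B + ρ • V)⁻¹ *ᵥ z = s / (1 + t) := by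
    have hts : (1:ℝ) + ρ * s ≠ 0 := by rw [← htdef]; exact h1t.ne'
    rw [hqz, hrdef, htdef]
    field_simp
    ring
  set K := c * Real.log ((B + ρ • V).det / (lam • (1 : Matrix (Fin d) (Fin d) ℝ)).det) with hK
  set q0 := x ⬝ᵥ (B + ρ • V)⁻¹ *ᵥ x with hq0def
  set b0 := x ⬝ᵥ (B + ρ • V)⁻¹ *ᵥ z + z ⬝ᵥ (B + ρ • V)⁻¹ *ᵥ x with hb0def
  set q := z ⬝ᵥ (B + ρ • V)⁻¹ *ᵥ z with hqdef
  have hfeq : ∀ α : ℝ, Uvaw d ρ lam c (x + α • z) (S + V)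
      = ((1/2)*q0 - K) + ((1/2)*b0)*α + ((1/2)*q)*α^2 := by
    intro α
    simp only [Uvaw, hBA]
    rw [myDot_expand]
    rw [hq0def, hb0def, hqdef, hK]
    ring
  have haeIcc : ∀ᵐ α ∂p, α ∈ Set.Icc (-L) L := by
    rw [MeasureTheory.ae_iff]
    exact hsupp
  have hbound1 : ∀ᵐ α ∂p, ‖α‖ ≤ L := haeIcc.mono fun α hα => by
    rw [Real.norm_eq_abs]; exact abs_le.2 ⟨hα.1, hα.2⟩
  have hint1 : Integrable (fun α : ℝ => α) p :=
    (integrable_const L).mono' measurable_id.aestronglyMeasurable hbound1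
  have hbound2 : ∀ᵐ α ∂p, ‖α^2‖ ≤ L^2 := haeIcc.mono fun α hα => by
    rw [Real.norm_eq_abs, abs_of_nonneg (sq_nonneg α)]
    exact sq_le_sq' hα.1 hα.2
  have hint2 : Integrable (fun α : ℝ => α^2) p :=
    (integrable_const (L^2)).mono' ((measurable_id.pow_const 2).aestronglyMeasurable) hbound2
  set m2 := ∫ α, α^2 ∂p with hm2def
  have hm2le : m2 ≤ L^2 := by
    have h := integral_mono_ae hint2 (integrable_const (L^2))
      (haeIcc.mono fun α hα => sq_le_sq' hα.1 hα.2)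
    simpa [hm2def] using h
  have hm2nn : 0 ≤ m2 := integral_nonneg fun α => sq_nonneg α
  have hintval : ∫ α, Uvaw d ρ lam c (x + α • z) (S + V) ∂p
      = ((1/2)*q0 - K) + ((1/2)*q) * m2 := by
    calc ∫ α, Uvaw d ρ lam c (x + α • z) (S + V) ∂p
        = ∫ α, (((1/2)*q0 - K) + ((1/2)*b0)*α + ((1/2)*q)*α^2) ∂p :=
          integral_congr_ae (Filter.Eventually.of_forall fun α => hfeq α)
      _ = ((1/2)*q0 - K) + ((1/2)*b0) * (∫ α, α ∂p) + ((1/2)*q) * m2 := by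
          have i1 : Integrable (fun α : ℝ => ((1/2)*b0)*α) p := hint1.const_mul _
          have i2 : Integrable (fun α : ℝ => ((1/2)*q)*α^2) p := hint2.const_mul _
          have h1 : ∫ α, (((1/2)*q0 - K) + ((1/2)*b0)*α + ((1/2)*q)*α^2) ∂p
              = (∫ α, (((1/2)*q0 - K) + ((1/2)*b0)*α) ∂p) + ∫ α, ((1/2)*q)*α^2 ∂p :=
            integral_add ((integrable_const _).add i1) i2
          have h2 : ∫ α, (((1/2)*q0 - K) + ((1/2)*b0)*α) ∂p
              = (∫ _, ((1/2)*q0 - K) ∂p) + ∫ α, ((1/2)*b0)*α ∂p :=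
            integral_add (integrable_const _) i1
          rw [h1, h2, integral_const, MeasureTheory.integral_const_mul, MeasureTheory.integral_const_mul]
          simp [hm2def]
      _ = ((1/2)*q0 - K) + ((1/2)*q) * m2 := by rw [hmean]; ring
  have hlognn : 0 ≤ Real.log (1 + t) := Real.log_nonneg (by linarith)
  have hlog1 : t / (1 + t) ≤ Real.log (1 + t) := by
    have h1 := Real.one_sub_inv_le_log_of_pos h1t
    have h2 : 1 - (1 + t)⁻¹ = t / (1 + t) := by field_simp; ring
    linarith
  have hkey : (1/2) * q * L^2 ≤ c * Real.log (1 + t) := by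
    have e3 : (1/2) * q * L^2 = (1/2) * (L^2/ρ) * (t / (1 + t)) := by
      rw [hqval, htdef]
      have hts : (1:ℝ) + ρ * s ≠ 0 := by rw [← htdef]; exact h1t.ne'
      field_simp
    have e4 : (1/2) * (L^2/ρ) * (t / (1 + t)) ≤ (1/2) * (L^2/ρ) * Real.log (1 + t) :=
      mul_le_mul_of_nonneg_left hlog1 (by positivity)
    have e5 : (1/2) * (L^2/ρ) * Real.log (1 + t) ≤ c * Real.log (1 + t) := by
      apply mul_le_mul_of_nonneg_right _ hlognn
      have h6 : 0 ≤ L^2/ρ := by positivity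
      linarith
    linarith
  rw [hintval]
  simp only [Uvaw]
  have hqm : ((1/2)*q) * m2 ≤ (1/2) * q * L^2 :=
    mul_le_mul_of_nonneg_left hm2le (by linarith [hqnn])
  have hKval : K = c * Real.log (B.det / (lam • (1 : Matrix (Fin d) (Fin d) ℝ)).det)
      + c * Real.log (1 + t) := by
    rw [hK, hlogsplit, mul_add]
  have hrq : 0 ≤ r * (x ⬝ᵥ B⁻¹ *ᵥ z)^2 := mul_nonneg hr (sq_nonneg _)
  linarith [hq0, hKval, hqm, hkey, hrq]
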